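/- Let a and n be integers with a ≠ 0 and n ≥ 2, let r = gcd(a, n), let k be the multiplicity of 2 in n/r, and write n = 2^k·r·m with m odd. Then for every integer z: if k = 0, 1, or 2, then n divides 4·a·z if and only if m divides z; and if k ≥ 3, then n divides 4·a·z if and only if 2^{k−2}·m divides z. -/

import Mathlib

/-- Paper's Lemma 3.1. -/
theorem lemma_3_1 (a n r m : ℤ) (k : ℕ) (ha : a ≠ 0) (hn : 2 ≤ n)
    (hr : r = Int.gcd a n) (hk : k = padicValInt 2 (n / r))
    (hnm : n = 2 ^ k * r * m) (hmodd : Odd m) :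
    ∀ z : ℤ,
      (k ≤ 2 → (n ∣ 4 * a * z ↔ m ∣ z)) ∧
      (3 ≤ k → (n ∣ 4 * a * z ↔ 2 ^ (k - 2) * m ∣ z)) := by
  have hgpos : 0 < Int.gcd a n := Int.gcd_pos_of_ne_zero_left n ha
  have hr0 : r ≠ 0 := by
    rw [hr]; exact_mod_cast hgpos.ne'
  have hra : r ∣ a := hr ▸ Int.gcd_dvd_left a n
  have hrn : r ∣ n := hr ▸ Int.gcd_dvd_right a n
  set a' : ℤ := a / r with ha'
  have haa : a = r * a' := (Int.mul_ediv_cancel' hra).symm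
  have hnr : n / r = 2 ^ k * m := by
    rw [hnm]
    rw [show (2:ℤ) ^ k * r * m = r * (2 ^ k * m) by ring]
    exact Int.mul_ediv_cancel_left _ hr0
  have hcop : IsCoprime a' (2 ^ k * m) := by
    rw [Int.isCoprime_iff_gcd_eq_one, ← hnr, ha', hr]
    exact Int.gcd_div_gcd_div_gcd hgpos
  have h2 : ¬ (2:ℤ) ∣ m := by
    obtain ⟨t, ht⟩ := hmodd; omega
  have h2m : IsCoprime (2 : ℤ) m := (Int.prime_two.coprime_iff_not_dvd).mpr h2
  have key : ∀ z : ℤ, n ∣ 4 * a * z ↔ 2 ^ k * m ∣ 4 * z := by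
    intro z
    have e1 : n = r * (2 ^ k * m) := by rw [hnm]; ring
    have e2 : 4 * a * z = r * (a' * (4 * z)) := by rw [haa]; ring
    rw [e1, e2, mul_dvd_mul_iff_left hr0]
    constructor
    · exact fun h => (hcop.symm).dvd_of_dvd_mul_left h
    · exact fun h => h.mul_left a'
  intro z
  constructor
  · intro hk2
    rw [key]
    constructor
    · intro h
      have hm4z : m ∣ 4 * z := (dvd_mul_left m _).trans h
      have h4m : IsCoprime ((2:ℤ) ^ 2) m := h2m.pow_left
      exact h4m.symm.dvd_of_dvd_mul_left (by
        rwa [show (4:ℤ) * z = 2 ^ 2 * z by norm_num] at hm4z)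
    · intro h
      have h2k4 : (2:ℤ) ^ k ∣ 4 := by
        rw [show (4:ℤ) = 2 ^ 2 by norm_num]
        exact pow_dvd_pow 2 hk2
      exact mul_dvd_mul h2k4 h
  · intro hk3
    rw [key]
    have e3 : (2:ℤ) ^ k = 4 * 2 ^ (k - 2) := by
      rw [show (4:ℤ) = 2 ^ 2 by norm_num, ← pow_add]
      congr 1
      omega
    rw [e3, show (4:ℤ) * 2 ^ (k-2) * m = 4 * (2 ^ (k-2) * m) by ring,
      mul_dvd_mul_iff_left (by norm_num : (4:ℤ) ≠ 0)]
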